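/- Let the Σ₂ family {p₀, p₂, p₃, p₄, …} be multiplicatively closed with z² p_j in its ℂ-linear span for every j. Then for every n ≥ 1, in ℂ((z⁻¹)) with λ = z², one has p_{2n+1} = (λ^{n−1} − ∑_{i=0}^{n−2} H^{2(n−i)−1}_{−1} λ^i) · p₃; in particular this follows from the recursion p_{2n+1} = λ p_{2n−1} − H^{2n−1}_{−1} p₃ for n ≥ 2. -/

import Mathlib

open Finset

noncomputable section

/-- `z^j` viewed as a formal Laurent series in `t = z⁻¹` (so `z^j = t^(-j)`). -/
def zp (j : ℤ) : LaurentSeries ℂ := HahnSeries.single (-j) 1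

/-- The element `p₀ = 1 + ∑_{k ≥ 1} H^0_k z^(-k)` of the `Σ₂` family. -/
def sigma2zero (H : ℕ → ℤ → ℂ) : LaurentSeries ℂ :=
  1 + HahnSeries.ofPowerSeries ℤ ℂ (PowerSeries.mk fun k => if 1 ≤ k then H 0 (k:ℤ) else 0)

/-- The elements `p_j = z^j + H^j_{-1} z + ∑_{k ≥ 1} H^j_k z^(-k)`, `j ≥ 2`, of the `Σ₂`
family. -/
def sigma2 (H : ℕ → ℤ → ℂ) (j : ℕ) : LaurentSeries ℂ :=
  zp j + H j (-1) • zp 1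
    + HahnSeries.ofPowerSeries ℤ ℂ (PowerSeries.mk fun k => if 1 ≤ k then H j (k:ℤ) else 0)

/-- The `Σ₂` family `{p₀, p₂, p₃, p₄, …}` as a set of Laurent series. -/
def sigma2Set (H : ℕ → ℤ → ℂ) : Set (LaurentSeries ℂ) :=
  insert (sigma2zero H) (sigma2 H '' {j | 2 ≤ j})

/-! ### Auxiliary definitions and basic coefficient lemmas -/

/-- The "tail" `∑_{k ≥ 1} H^j_k z^(-k)` of the members of the family. -/
def tl (H : ℕ → ℤ → ℂ) (j : ℕ) : LaurentSeries ℂ :=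
  HahnSeries.ofPowerSeries ℤ ℂ (PowerSeries.mk fun k => if 1 ≤ k then H j (k:ℤ) else 0)

lemma zp_coeff (j m : ℤ) : (zp j).coeff m = if m = -j then 1 else 0 := by
  simp [zp, HahnSeries.coeff_single]

lemma tl_coeff (H : ℕ → ℤ → ℂ) (j : ℕ) (m : ℤ) :
    (tl H j).coeff m = if 1 ≤ m then H j m else 0 := by
  rcases le_or_gt 0 m with hm | hm
  · lift m to ℕ using hm
    rw [tl, HahnSeries.ofPowerSeries_apply_coeff]
    simp [PowerSeries.coeff_mk]
  · rw [tl, HahnSeries.ofPowerSeries_apply]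
    rw [HahnSeries.embDomain_of_notMem_range]
    · rw [if_neg (by omega)]
    · rintro ⟨n, hn⟩
      simp at hn
      omega

lemma tl_coeff_low (H : ℕ → ℤ → ℂ) (j : ℕ) {m : ℤ} (hm : m < 1) : (tl H j).coeff m = 0 := by
  rw [tl_coeff, if_neg (by omega)]

variable (H : ℕ → ℤ → ℂ)

lemma sigma2zero_eq : sigma2zero H = 1 + tl H 0 := rfl
lemma sigma2_eq (j : ℕ) : sigma2 H j = zp j + H j (-1) • zp 1 + tl H j := rfl

lemma sigma2_coeff (j : ℕ) (m : ℤ) :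
    (sigma2 H j).coeff m = (if m = -(j:ℤ) then 1 else 0) + (if m = -1 then H j (-1) else 0)
      + (if 1 ≤ m then H j m else 0) := by
  rw [sigma2_eq, HahnSeries.coeff_add, HahnSeries.coeff_add, HahnSeries.coeff_smul,
    zp_coeff, zp_coeff, tl_coeff]
  simp [mul_ite]

lemma sigma2_coeff_zero (j : ℕ) (hj : 2 ≤ j) : (sigma2 H j).coeff 0 = 0 := by
  rw [sigma2_coeff]
  rw [if_neg (by omega), if_neg (by omega), if_neg (by omega)]
  ring

lemma sigma2_coeff_negm (j m : ℕ) (hm : 2 ≤ m) :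
    (sigma2 H j).coeff (-(m:ℤ)) = if j = m then 1 else 0 := by
  rw [sigma2_coeff]
  by_cases h : j = m
  · subst h
    rw [if_pos rfl, if_neg (by omega), if_neg (by omega), if_pos rfl]; ring
  · rw [if_neg (by omega), if_neg (by omega), if_neg (by omega), if_neg h]; ring

lemma sigma2_coeff_neg1 (j : ℕ) (hj : 2 ≤ j) : (sigma2 H j).coeff (-1) = H j (-1) := by
  rw [sigma2_coeff]
  rw [if_neg (by omega), if_pos rfl, if_neg (by omega)]
  ring

lemma sigma2zero_coeff_zero : (sigma2zero H).coeff 0 = 1 := by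
  rw [sigma2zero_eq, HahnSeries.coeff_add, tl_coeff, HahnSeries.coeff_one]
  norm_num

lemma sigma2zero_coeff_neg (m : ℤ) (hm : m < 0) : (sigma2zero H).coeff m = 0 := by
  rw [sigma2zero_eq, HahnSeries.coeff_add, tl_coeff, HahnSeries.coeff_one]
  rw [if_neg (by omega), if_neg (by omega)]
  ring

lemma mem0 : sigma2zero H ∈ sigma2Set H := Set.mem_insert _ _

lemma memj (j : ℕ) (hj : 2 ≤ j) : sigma2 H j ∈ sigma2Set H :=
  Set.mem_insert_of_mem _ ⟨j, hj, rfl⟩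

/-! ### The extraction lemma -/

lemma coeff_sum {ι : Type*} (s : Finset ι) (f : ι → LaurentSeries ℂ) (g : ℤ) :
    (∑ i ∈ s, f i).coeff g = ∑ i ∈ s, (f i).coeff g :=
  map_sum (HahnSeries.coeff.addMonoidHom g) f s

/-- An auxiliary enumeration of the family. -/
def fam : ℕ → LaurentSeries ℂ := fun j => if 2 ≤ j then sigma2 H j else sigma2zero H

lemma range_fam : Set.range (fam H) = sigma2Set H := by
  ext x
  constructor
  · rintro ⟨j, rfl⟩
    by_cases h : 2 ≤ j
    · exact Set.mem_insert_of_mem _ ⟨j, h, by simp [fam, h]⟩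
    · simp [fam, h, sigma2Set]
  · rintro (rfl | ⟨j, hj, rfl⟩)
    · exact ⟨0, by simp [fam]⟩
    · exact ⟨j, by simp only [fam, if_pos (show 2 ≤ j from hj)]⟩

/-- Any member of the span of the family is a canonical combination of family members,
with coefficients read off from its Laurent coefficients. -/
lemma extraction {v : LaurentSeries ℂ} (hv : v ∈ Submodule.span ℂ (sigma2Set H)) :
    ∃ N : ℕ, ∀ M : ℕ, N ≤ M → 2 ≤ M →
      v = v.coeff 0 • sigma2zero H + ∑ j ∈ Icc 2 M, v.coeff (-(j:ℤ)) • sigma2 H j := by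
  rw [← range_fam] at hv
  obtain ⟨c, hc⟩ := Finsupp.mem_span_range_iff_exists_finsupp.mp hv
  refine ⟨c.support.sup id, fun M hNM hM => ?_⟩
  have hsupp : c.support ⊆ Finset.range (M + 1) := by
    intro i hi
    have := Finset.le_sup (f := id) hi
    simp only [id] at this
    exact Finset.mem_range.mpr (by omega)
  have hv2 : v = ∑ j ∈ Finset.range (M+1), c j • fam H j := by
    rw [← hc]
    exact Finsupp.sum_of_support_subset c hsupp _ (fun i _ => zero_smul ℂ _)
  have hsplit : v = (c 0 + c 1) • sigma2zero H + ∑ j ∈ Icc 2 M, c j • sigma2 H j := by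
    rw [hv2]
    have h1 : Finset.range (M+1) = Finset.Ico 0 (M+1) := by rw [Finset.range_eq_Ico]
    rw [h1, ← Finset.sum_Ico_consecutive _ (by omega : 0 ≤ 2) (by omega : 2 ≤ M+1)]
    have h2 : Finset.Ico 2 (M+1) = Icc 2 M := by rw [Finset.Ico_add_one_right_eq_Icc]
    rw [h2]
    have h3 : ∑ j ∈ Finset.Ico 0 2, c j • fam H j = (c 0 + c 1) • sigma2zero H := by
      rw [show Finset.Ico 0 2 = {0, 1} by decide]
      rw [Finset.sum_insert (by decide), Finset.sum_singleton]
      simp only [fam]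
      norm_num
      exact (add_smul _ _ _).symm
    rw [h3]
    congr 1
    refine Finset.sum_congr rfl (fun j hj => ?_)
    have : 2 ≤ j := (Finset.mem_Icc.mp hj).1
    simp [fam, this]
  have h0 : v.coeff 0 = c 0 + c 1 := by
    rw [hsplit, HahnSeries.coeff_add, HahnSeries.coeff_smul, sigma2zero_coeff_zero,
      coeff_sum]
    rw [Finset.sum_eq_zero (fun j hj => by
      rw [HahnSeries.coeff_smul, sigma2_coeff_zero H j (Finset.mem_Icc.mp hj).1, smul_zero])]
    simp
  have hm : ∀ m ∈ Icc 2 M, v.coeff (-(m:ℤ)) = c m := by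
    intro m hm'
    obtain ⟨hm2, hmM⟩ := Finset.mem_Icc.mp hm'
    rw [hsplit, HahnSeries.coeff_add, HahnSeries.coeff_smul,
      sigma2zero_coeff_neg H _ (by omega : -(m:ℤ) < 0), coeff_sum]
    simp only [HahnSeries.coeff_smul, sigma2_coeff_negm H _ _ hm2, smul_eq_mul, mul_ite,
      mul_one, mul_zero, smul_zero]
    rw [Finset.sum_ite_eq' (Icc 2 M) m c]
    simp [hm']
  have hsum : (∑ j ∈ Icc 2 M, v.coeff (-(j:ℤ)) • sigma2 H j)
      = ∑ j ∈ Icc 2 M, c j • sigma2 H j :=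
    Finset.sum_congr rfl (fun j hj => by rw [hm j hj])
  rw [h0, hsum]
  exact hsplit

/-! ### Parity -/

/-- A Laurent series supported on even exponents. -/
def Ev (x : LaurentSeries ℂ) : Prop := ∀ m : ℤ, Odd m → x.coeff m = 0

/-- A Laurent series supported on odd exponents. -/
def Od (x : LaurentSeries ℂ) : Prop := ∀ m : ℤ, Even m → x.coeff m = 0

lemma Ev.mul_od {x y : LaurentSeries ℂ} (hx : Ev x) (hy : Od y) : Od (x * y) := by
  intro m hm
  by_contra h
  have hmem : m ∈ (x * y).support := h
  obtain ⟨i, hi, j, hj, hij⟩ := HahnSeries.support_mul_subset hmem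
  have hij' : i + j = m := hij
  rcases Int.even_or_odd i with hie | hio
  · rcases Int.even_or_odd j with hje | hjo
    · exact hj (hy j hje)
    · exfalso; rw [Int.even_iff] at hie hm; rw [Int.odd_iff] at hjo; omega
  · exact hi (hx i hio)

lemma Ev.mul_ev {x y : LaurentSeries ℂ} (hx : Ev x) (hy : Ev y) : Ev (x * y) := by
  intro m hm
  by_contra h
  obtain ⟨i, hi, j, hj, hij⟩ := HahnSeries.support_mul_subset (h : _ ∈ (x*y).support)
  have hij' : i + j = m := hij
  rcases Int.even_or_odd i with hie | hio
  · rcases Int.even_or_odd j with hje | hjo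
    · exfalso; rw [Int.even_iff] at hie hje; rw [Int.odd_iff] at hm; omega
    · exact hj (hy j hjo)
  · exact hi (hx i hio)

lemma Od.mul_od {x y : LaurentSeries ℂ} (hx : Od x) (hy : Od y) : Ev (x * y) := by
  intro m hm
  by_contra h
  obtain ⟨i, hi, j, hj, hij⟩ := HahnSeries.support_mul_subset (h : _ ∈ (x*y).support)
  have hij' : i + j = m := hij
  rcases Int.even_or_odd i with hie | hio
  · exact hi (hx i hie)
  · rcases Int.even_or_odd j with hje | hjo
    · exact hj (hy j hje)
    · exfalso; rw [Int.odd_iff] at hio hjo; rw [Int.odd_iff] at hm; omega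

lemma Ev.add {x y : LaurentSeries ℂ} (hx : Ev x) (hy : Ev y) : Ev (x + y) := fun m hm => by
  rw [HahnSeries.coeff_add, hx m hm, hy m hm, add_zero]

lemma Od.add {x y : LaurentSeries ℂ} (hx : Od x) (hy : Od y) : Od (x + y) := fun m hm => by
  rw [HahnSeries.coeff_add, hx m hm, hy m hm, add_zero]

lemma Ev.smul (r : ℂ) {x : LaurentSeries ℂ} (hx : Ev x) : Ev (r • x) := fun m hm => by
  rw [HahnSeries.coeff_smul, hx m hm, smul_zero]

lemma Ev.neg {x : LaurentSeries ℂ} (hx : Ev x) : Ev (-x) := fun m hm => by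
  rw [HahnSeries.coeff_neg, hx m hm, neg_zero]

lemma Ev.sub {x y : LaurentSeries ℂ} (hx : Ev x) (hy : Ev y) : Ev (x - y) := by
  rw [sub_eq_add_neg]; exact hx.add hy.neg

lemma Ev_zero : Ev 0 := fun _ _ => rfl

lemma Ev_single {a : ℤ} (ha : Even a) (r : ℂ) : Ev (HahnSeries.single a r) := fun m hm => by
  rw [HahnSeries.coeff_single]
  rw [if_neg (fun h => by subst h; rw [Int.even_iff] at ha; rw [Int.odd_iff] at hm; omega)]

lemma Ev_one : Ev 1 := by
  have : (1 : LaurentSeries ℂ) = HahnSeries.single 0 1 := rfl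
  rw [this]; exact Ev_single Even.zero 1

lemma Ev_zp2 : Ev (zp 2) := Ev_single (by decide) 1

lemma Ev_zp2_pow (i : ℕ) : Ev (zp 2 ^ i) := by
  rw [zp, HahnSeries.single_pow]
  exact Ev_single (by simp [Int.even_iff]) _

lemma Ev_sum {ι : Type*} (s : Finset ι) (f : ι → LaurentSeries ℂ)
    (h : ∀ i ∈ s, Ev (f i)) : Ev (∑ i ∈ s, f i) := by
  classical
  induction s using Finset.induction with
  | empty => simpa using Ev_zero
  | insert _ _ hx ih =>
    rw [Finset.sum_insert hx]
    exact (h _ (Finset.mem_insert_self _ _)).add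
      (ih (fun i hi => h i (Finset.mem_insert_of_mem hi)))

lemma ev_and_od_eq_zero {x : LaurentSeries ℂ} (he : Ev x) (ho : Od x) : x = 0 := by
  ext m
  rcases Int.even_or_odd m with h | h
  · exact ho m h
  · exact he m h

/-! ### Product coefficient helpers -/

lemma zp_mul_zp (a b : ℤ) : zp a * zp b = zp (a+b) := by
  rw [zp, zp, zp, HahnSeries.single_mul_single, one_mul, neg_add]

lemma zp_mul_coeff (a : ℤ) (x : LaurentSeries ℂ) (m : ℤ) :
    (zp a * x).coeff m = x.coeff (m + a) := by
  have h := HahnSeries.coeff_single_mul_add (r := (1:ℂ)) (x := x) (a := m + a) (b := -a)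
  rw [one_mul] at h
  rw [zp]
  simpa using h

lemma mul_coeff_eq_zero {x y : LaurentSeries ℂ} {c d : ℤ}
    (hx : ∀ m, m < c → x.coeff m = 0) (hy : ∀ m, m < d → y.coeff m = 0)
    {m : ℤ} (hm : m < c + d) : (x * y).coeff m = 0 := by
  by_contra h
  obtain ⟨i, hi, j, hj, hij⟩ := HahnSeries.support_mul_subset
    (h : _ ∈ (x*y).support)
  have hij' : i + j = m := hij
  have h1 : ¬ i < c := fun hc => hi (hx i hc)
  have h2 : ¬ j < d := fun hc => hj (hy j hc)
  omega


/-! ### Scalar multiplication helpers (for the `HahnSeries` pointwise `•` instance) -/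

lemma czero_smul (x : LaurentSeries ℂ) : (0:ℂ) • x = 0 := by
  ext m
  rw [HahnSeries.coeff_smul]
  simp

lemma cone_smul (x : LaurentSeries ℂ) : (1:ℂ) • x = x := by
  ext m
  rw [HahnSeries.coeff_smul]
  simp

lemma cadd_smul (a b : ℂ) (x : LaurentSeries ℂ) : (a + b) • x = a • x + b • x := by
  ext m
  rw [HahnSeries.coeff_add, HahnSeries.coeff_smul, HahnSeries.coeff_smul, HahnSeries.coeff_smul]
  simp [add_mul]

lemma cite_smul (c : Prop) [Decidable c] (a b : ℂ) (x : LaurentSeries ℂ) :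
    (if c then a else b) • x = if c then a • x else b • x := by
  split <;> rfl

lemma csmul_mul (a : ℂ) (x y : LaurentSeries ℂ) : (a • x) * y = a • (x * y) := by
  rw [← HahnSeries.single_zero_mul_eq_smul, ← HahnSeries.single_zero_mul_eq_smul, mul_assoc]

lemma cmul_smul (a : ℂ) (x y : LaurentSeries ℂ) : x * (a • y) = a • (x * y) := by
  rw [← HahnSeries.single_zero_mul_eq_smul, ← HahnSeries.single_zero_mul_eq_smul,
    ← mul_assoc, mul_comm x, mul_assoc]

lemma csmul_smul (a b : ℂ) (x : LaurentSeries ℂ) : a • (b • x) = (a * b) • x := by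
  rw [← HahnSeries.single_zero_mul_eq_smul, ← HahnSeries.single_zero_mul_eq_smul,
    ← HahnSeries.single_zero_mul_eq_smul, ← mul_assoc, HahnSeries.single_mul_single, add_zero]

/-! ### Consequences of the hypotheses -/

section Main

variable (hmul : ∀ x ∈ sigma2Set H, ∀ y ∈ sigma2Set H, x * y ∈ Submodule.span ℂ (sigma2Set H))
variable (hz2 : ∀ x ∈ sigma2Set H, zp 2 * x ∈ Submodule.span ℂ (sigma2Set H))

include hmul in
/-- `p₀ = 1`. -/
lemma p0_eq_one : sigma2zero H = 1 := by
  have hS : sigma2zero H * sigma2zero H ∈ Submodule.span ℂ (sigma2Set H) :=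
    hmul _ (mem0 H) _ (mem0 H)
  have hexp : sigma2zero H * sigma2zero H = 1 + tl H 0 + tl H 0 + tl H 0 * tl H 0 := by
    rw [sigma2zero_eq]; ring
  have hc0 : (sigma2zero H * sigma2zero H).coeff 0 = 1 := by
    rw [hexp, HahnSeries.coeff_add, HahnSeries.coeff_add, HahnSeries.coeff_add,
      HahnSeries.coeff_one, tl_coeff_low H 0 (by omega : (0:ℤ) < 1),
      mul_coeff_eq_zero (fun m hm => tl_coeff_low H 0 hm) (fun m hm => tl_coeff_low H 0 hm)
        (by omega : (0:ℤ) < 1 + 1)]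
    norm_num
  have hcneg : ∀ j : ℕ, 2 ≤ j → (sigma2zero H * sigma2zero H).coeff (-(j:ℤ)) = 0 := by
    intro j hj
    rw [hexp, HahnSeries.coeff_add, HahnSeries.coeff_add, HahnSeries.coeff_add,
      HahnSeries.coeff_one, tl_coeff_low H 0 (by omega : -(j:ℤ) < 1),
      mul_coeff_eq_zero (fun m hm => tl_coeff_low H 0 hm) (fun m hm => tl_coeff_low H 0 hm)
        (by omega : -(j:ℤ) < 1 + 1)]
    rw [if_neg (by omega)]
    norm_num
  obtain ⟨N, hN⟩ := extraction H hS
  have heq := hN (max N 2) (le_max_left _ _) (le_max_right _ _)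
  rw [hc0, cone_smul, Finset.sum_eq_zero (fun j hj => by
    rw [hcneg j (Finset.mem_Icc.mp hj).1, czero_smul]), add_zero] at heq
  -- now : p₀ * p₀ = p₀
  have hne : sigma2zero H ≠ 0 := fun h => by
    have := sigma2zero_coeff_zero H
    rw [h] at this
    simp at this
  have : sigma2zero H * sigma2zero H = sigma2zero H * 1 := by rw [mul_one]; exact heq
  exact mul_left_cancel₀ hne this

/-- If `z^m` lies in the span, then `p_m = z^m`. -/
lemma zp_mem_imp (m : ℕ) (hm : 2 ≤ m)
    (hv : (zp (m:ℤ)) ∈ Submodule.span ℂ (sigma2Set H)) : sigma2 H m = zp (m:ℤ) := by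
  obtain ⟨N, hN⟩ := extraction H hv
  have heq := hN (max N m) (le_max_left _ _) (by omega)
  have hc0 : (zp (m:ℤ)).coeff 0 = 0 := by rw [zp_coeff, if_neg (by omega)]
  have hcneg : ∀ j : ℕ, (zp (m:ℤ)).coeff (-(j:ℤ)) = if j = m then 1 else 0 := by
    intro j
    rw [zp_coeff]
    by_cases h : j = m
    · rw [if_pos (by omega), if_pos h]
    · rw [if_neg (by omega), if_neg h]
  rw [hc0, czero_smul, zero_add] at heq
  have hsum : ∑ j ∈ Icc 2 (max N m), (zp (m:ℤ)).coeff (-(j:ℤ)) • sigma2 H j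
      = sigma2 H m := by
    rw [Finset.sum_congr rfl (fun j _ => by rw [hcneg j, cite_smul, cone_smul, czero_smul])]
    rw [Finset.sum_ite_eq' (Icc 2 (max N m)) m (fun j => sigma2 H j)]
    rw [if_pos (Finset.mem_Icc.mpr ⟨hm, le_max_right _ _⟩)]
  rw [hsum] at heq
  exact heq.symm

include hmul hz2 in
lemma p2_eq : sigma2 H 2 = zp 2 := by
  have h := hz2 _ (mem0 H)
  rw [p0_eq_one H hmul, mul_one] at h
  exact zp_mem_imp H 2 (by omega) (by exact_mod_cast h)

include hmul hz2 in
lemma p4_eq : sigma2 H 4 = zp 4 := by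
  have h := hz2 _ (memj H 2 (by omega))
  rw [p2_eq H hmul hz2] at h
  rw [zp_mul_zp] at h
  norm_num at h
  exact zp_mem_imp H 4 (by omega) (by exact_mod_cast h)

include hmul hz2 in
lemma p6_eq : sigma2 H 6 = zp 6 := by
  have h := hz2 _ (memj H 4 (by omega))
  rw [p4_eq H hmul hz2] at h
  rw [zp_mul_zp] at h
  norm_num at h
  exact zp_mem_imp H 6 (by omega) (by exact_mod_cast h)

include hmul hz2 in
/-- `p₃` is supported on odd exponents. -/
lemma od_p3 : Od (sigma2 H 3) := by
  classical
  set p3 := sigma2 H 3 with hp3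
  set S := p3 * p3 with hSdef
  have hS : S ∈ Submodule.span ℂ (sigma2Set H) := hmul _ (memj H 3 (by omega)) _ (memj H 3 (by omega))
  set a := H 3 (-1) with ha
  set T := tl H 3 with hT
  have hexp : S = zp 3 * zp 3 + zp 3 * (a • zp 1) + (a • zp 1) * zp 3 + (a • zp 1) * (a • zp 1)
      + zp 3 * T + T * zp 3 + (a • zp 1) * T + T * (a • zp 1) + T * T := by
    rw [hSdef, hp3, sigma2_eq]; simp only [ha, hT]; ring
  -- the only possibly-nonzero coefficients `coeff (-j)`, `j ≥ 2`, occur for `j ∈ {2,4,6}`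
  have hlow3 : ∀ m : ℤ, m < -3 → (zp 3 : LaurentSeries ℂ).coeff m = 0 := by
    intro m hm; rw [zp_coeff, if_neg (by omega)]
  have hlow1 : ∀ m : ℤ, m < -1 → ((a • zp 1) : LaurentSeries ℂ).coeff m = 0 := by
    intro m hm; rw [HahnSeries.coeff_smul, zp_coeff, if_neg (by omega), smul_zero]
  have hlowT : ∀ m : ℤ, m < 1 → T.coeff m = 0 := fun m hm => tl_coeff_low H 3 hm
  have hcoeff : ∀ j : ℕ, 2 ≤ j → j ≠ 2 → j ≠ 4 → j ≠ 6 → S.coeff (-(j:ℤ)) = 0 := by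
    intro j hj h2 h4 h6
    have hj3 : 3 ≤ j := by omega
    rw [hexp]
    rw [show zp 3 * zp 3 = zp 6 by rw [zp_mul_zp]; norm_num]
    rw [show zp 3 * (a • zp 1) = a • zp 4 by rw [cmul_smul, zp_mul_zp]; norm_num]
    rw [show (a • zp 1) * zp 3 = a • zp 4 by rw [csmul_mul, zp_mul_zp]; norm_num]
    rw [show (a • zp 1) * (a • zp 1) = (a*a) • zp 2 by
      rw [csmul_mul, cmul_smul, csmul_smul, zp_mul_zp]; norm_num]
    rw [show T * zp 3 = zp 3 * T from mul_comm _ _]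
    rw [show T * (a • zp 1) = (a • zp 1) * T from mul_comm _ _]
    rw [show ((a • zp 1) * T : LaurentSeries ℂ) = a • (zp 1 * T) by rw [csmul_mul]]
    simp only [HahnSeries.coeff_add]
    rw [HahnSeries.coeff_smul, HahnSeries.coeff_smul, HahnSeries.coeff_smul]
    rw [zp_mul_coeff, zp_mul_coeff]
    rw [zp_coeff, zp_coeff, zp_coeff]
    rw [tl_coeff_low H 3 (by omega : -(j:ℤ) + 3 < 1), tl_coeff_low H 3 (by omega : -(j:ℤ) + 1 < 1)]
    rw [mul_coeff_eq_zero hlowT hlowT (by omega : -(j:ℤ) < 1 + 1)]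
    rw [if_neg (by omega : ¬(-(j:ℤ) = -6)), if_neg (by omega : ¬(-(j:ℤ) = -4)),
      if_neg (by omega : ¬(-(j:ℤ) = -2))]
    simp
  -- representation of S
  obtain ⟨N, hN⟩ := extraction H hS
  have heq := hN (max N 6) (le_max_left _ _) (by omega)
  have hEvS : Ev S := by
    rw [heq]
    refine Ev.add ?_ ?_
    · rw [p0_eq_one H hmul]
      exact Ev.smul _ Ev_one
    · refine Ev_sum _ _ (fun j hj => ?_)
      obtain ⟨hj2, hjM⟩ := Finset.mem_Icc.mp hj
      by_cases h2 : j = 2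
      · subst h2; rw [p2_eq H hmul hz2]; exact Ev.smul _ Ev_zp2
      · by_cases h4 : j = 4
        · subst h4; rw [p4_eq H hmul hz2]
          exact Ev.smul _ (Ev_single (by decide) 1)
        · by_cases h6 : j = 6
          · subst h6; rw [p6_eq H hmul hz2]
            exact Ev.smul _ (Ev_single (by decide) 1)
          · rw [hcoeff j hj2 h2 h4 h6, czero_smul]
            exact Ev_zero
  -- even/odd decomposition of p₃
  let Ep : LaurentSeries ℂ :=
    { coeff := fun m => if Even m then p3.coeff m else 0
      isPWO_support' := Set.IsPWO.mono p3.isPWO_support' (by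
        intro m hm
        simp only [Function.mem_support] at hm ⊢
        intro h
        apply hm
        rw [h]
        simp) }
  have hEpcoeff : ∀ m, Ep.coeff m = if Even m then p3.coeff m else 0 := fun m => rfl
  have hEvEp : Ev Ep := fun m hm => by
    rw [hEpcoeff, if_neg (by rw [Int.even_iff]; rw [Int.odd_iff] at hm; omega)]
  set O := p3 - Ep with hO
  have hOdO : Od O := fun m hm => by
    rw [hO, HahnSeries.coeff_sub, hEpcoeff, if_pos hm, sub_self]
  have hrecomp : p3 = O + Ep := by rw [hO]; ring
  have hsq : Ep * O + Ep * O = S - O * O - Ep * Ep := by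
    rw [hSdef, hrecomp]; ring
  have hEv2 : Ev (Ep * O + Ep * O) := by
    rw [hsq]
    exact (hEvS.sub (hOdO.mul_od hOdO)).sub (hEvEp.mul_ev hEvEp)
  have hOd2 : Od (Ep * O + Ep * O) := (hEvEp.mul_od hOdO).add (hEvEp.mul_od hOdO)
  have hzero : Ep * O = 0 := by
    have h := ev_and_od_eq_zero hEv2 hOd2
    ext m
    have hc := congrArg (fun x : LaurentSeries ℂ => x.coeff m) h
    simp only [HahnSeries.coeff_add, HahnSeries.coeff_zero] at hc
    rw [HahnSeries.coeff_zero]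
    linear_combination hc / 2
  have hOne : O ≠ 0 := by
    intro h
    have hc : O.coeff (-3) = 1 := by
      rw [hO, HahnSeries.coeff_sub, hEpcoeff, if_neg (by decide)]
      have := sigma2_coeff_negm H 3 3 (by omega)
      norm_num at this
      rw [hp3, this]
      ring
    rw [h] at hc
    simp at hc
  have hEp0 : Ep = 0 := by
    rcases mul_eq_zero.mp hzero with h | h
    · exact h
    · exact absurd h hOne
  intro m hm
  have h1 : Ep.coeff m = p3.coeff m := by rw [hEpcoeff, if_pos hm]
  rw [← h1, hEp0]
  exact HahnSeries.coeff_zero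

include hz2 in
/-- The key recursion, at the level of span extraction. -/
lemma key_step (n : ℕ) (hn : 1 ≤ n) (hOd : Od (sigma2 H (2*n+1)))
    (hP0 : sigma2zero H = 1) :
    zp 2 * sigma2 H (2*n+1) = sigma2 H (2*n+3) + H (2*n+1) (-1) • sigma2 H 3 := by
  set p := sigma2 H (2*n+1) with hp
  set v := zp 2 * p with hv
  have hvspan : v ∈ Submodule.span ℂ (sigma2Set H) := hz2 _ (memj H (2*n+1) (by omega))
  have hOdv : Od v := Ev_zp2.mul_od hOd
  have hc0 : v.coeff 0 = 0 := hOdv 0 Even.zero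
  have hcneg : ∀ j : ℕ, 2 ≤ j →
      v.coeff (-(j:ℤ)) = (if j = 2*n+3 then 1 else 0) + (if j = 3 then H (2*n+1) (-1) else 0) := by
    intro j hj
    rcases Nat.even_or_odd j with hje | hjo
    · rw [hOdv (-(j:ℤ)) (by
        rw [Int.even_iff]
        rw [Nat.even_iff] at hje
        omega)]
      rw [if_neg (by rw [Nat.even_iff] at hje; omega), if_neg (by rw [Nat.even_iff] at hje; omega)]
      norm_num
    · rw [hv, zp_mul_coeff]
      by_cases h3 : j = 3
      · subst h3
        rw [show -((3:ℕ):ℤ) + 2 = -1 from by norm_num, hp, sigma2_coeff_neg1 H _ (by omega)]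
        rw [if_neg (by omega), if_pos rfl]
        norm_num
      · have hj5 : 5 ≤ j := by rw [Nat.odd_iff] at hjo; omega
        rw [show -((j:ℕ):ℤ) + 2 = -(((j-2:ℕ)):ℤ) from by omega, hp,
          sigma2_coeff_negm H (2*n+1) (j-2) (by omega)]
        rw [if_neg h3, add_zero]
        by_cases h : j = 2*n+3
        · rw [if_pos (by omega), if_pos h]
        · rw [if_neg (by omega), if_neg h]
  obtain ⟨N, hN⟩ := extraction H hvspan
  have heq := hN (max N (2*n+3)) (le_max_left _ _) (by omega)
  rw [hc0, czero_smul, zero_add] at heq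
  have hM3 : 3 ∈ Icc 2 (max N (2*n+3)) := Finset.mem_Icc.mpr ⟨by omega, by omega⟩
  have hM2n3 : 2*n+3 ∈ Icc 2 (max N (2*n+3)) := Finset.mem_Icc.mpr ⟨by omega, by omega⟩
  have hsum : ∑ j ∈ Icc 2 (max N (2*n+3)), v.coeff (-(j:ℤ)) • sigma2 H j
      = sigma2 H (2*n+3) + H (2*n+1) (-1) • sigma2 H 3 := by
    have hterm : ∀ j ∈ Icc 2 (max N (2*n+3)), v.coeff (-(j:ℤ)) • sigma2 H j
        = (if j = 2*n+3 then sigma2 H j else 0)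
          + (if j = 3 then H (2*n+1) (-1) • sigma2 H j else 0) := by
      intro j hj
      rw [hcneg j (Finset.mem_Icc.mp hj).1, cadd_smul, cite_smul, cite_smul, czero_smul,
        cone_smul]
    rw [Finset.sum_congr rfl hterm]
    rw [Finset.sum_add_distrib]
    rw [Finset.sum_ite_eq' _ (2*n+3) (fun j => sigma2 H j)]
    rw [Finset.sum_ite_eq' _ 3 (fun j => H (2*n+1) (-1) • sigma2 H j)]
    rw [if_pos hM2n3, if_pos hM3]
  rw [hsum] at heq
  exact heq

end Main

open Finset in
/-- Every odd element of `W₂ ⊂ Σ₂` is `p₃` times a polynomial in `λ = z²`,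
via the recursion `p_{2n+1} = λ p_{2n-1} - H^{2n-1}_{-1} p₃`. -/
theorem sigma2_odd_elements (H : ℕ → ℤ → ℂ)
    (hmul : ∀ x ∈ sigma2Set H, ∀ y ∈ sigma2Set H, x * y ∈ Submodule.span ℂ (sigma2Set H))
    (hz2 : ∀ x ∈ sigma2Set H, zp 2 * x ∈ Submodule.span ℂ (sigma2Set H)) :
    (∀ n : ℕ, 1 ≤ n →
      sigma2 H (2*n+1)
        = (zp 2 ^ (n-1) - ∑ i ∈ range (n-1), H (2*(n-i)-1) (-1) • zp 2 ^ i)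
            * sigma2 H 3) ∧
    (∀ n : ℕ, 2 ≤ n →
      sigma2 H (2*n+1) = zp 2 * sigma2 H (2*n-1) - H (2*n-1) (-1) • sigma2 H 3) := by
  have hP0 := p0_eq_one H hmul
  have hOd3 := od_p3 H hmul hz2
  have main : ∀ n : ℕ, 1 ≤ n →
      sigma2 H (2*n+1)
        = (zp 2 ^ (n-1) - ∑ i ∈ range (n-1), H (2*(n-i)-1) (-1) • zp 2 ^ i)
            * sigma2 H 3 := by
    intro n hn
    induction n, hn using Nat.le_induction with
    | base => simp
    | succ n hn ih =>
      obtain ⟨m, rfl⟩ : ∃ m, n = m + 1 := ⟨n - 1, by omega⟩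
      simp only [Nat.add_sub_cancel] at ih ⊢
      have hOdp : Od (sigma2 H (2*(m+1)+1)) := by
        rw [ih]
        exact ((Ev_zp2_pow m).sub (Ev_sum _ _ fun i _ =>
          Ev.smul _ (Ev_zp2_pow i))).mul_od hOd3
      have hk := key_step H hz2 (m+1) (by omega) hOdp hP0
      rw [show 2*(m+1+1)+1 = 2*(m+1)+3 from by ring]
      have h1 : sigma2 H (2*(m+1)+3)
          = zp 2 * sigma2 H (2*(m+1)+1) - H (2*(m+1)+1) (-1) • sigma2 H 3 :=
        eq_sub_of_add_eq hk.symm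
      rw [h1, ih]
      have hsum' : ∑ i ∈ range (m+1), H (2*(m+1+1-i)-1) (-1) • zp 2 ^ i
          = H (2*(m+1)+1) (-1) • 1
            + ∑ i ∈ range m, H (2*(m+1-i)-1) (-1) • (zp 2 * zp 2 ^ i) := by
        rw [Finset.sum_range_succ']
        rw [add_comm]
        congr 1
        refine Finset.sum_congr rfl fun i hi => ?_
        rw [show 2*(m+1+1-(i+1))-1 = 2*(m+1-i)-1 from by omega, pow_succ']
      rw [hsum']
      rw [← mul_assoc, mul_sub, Finset.mul_sum]
      simp only [cmul_smul]
      rw [← pow_succ']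
      rw [sub_mul, sub_mul, add_mul, csmul_mul, one_mul]
      abel
  refine ⟨main, ?_⟩
  intro n hn
  obtain ⟨m, rfl⟩ : ∃ m, n = m + 2 := ⟨n - 2, by omega⟩
  have hOdp : Od (sigma2 H (2*(m+1)+1)) := by
    rw [main (m+1) (by omega)]
    exact ((Ev_zp2_pow _).sub (Ev_sum _ _ fun i _ =>
      Ev.smul _ (Ev_zp2_pow i))).mul_od hOd3
  have hk := key_step H hz2 (m+1) (by omega) hOdp hP0
  rw [show 2*(m+2)+1 = 2*(m+1)+3 from by ring, show 2*(m+2)-1 = 2*(m+1)+1 from by omega]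
  exact eq_sub_of_add_eq hk.symm

end
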